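/- Every Quang 2-ring (Ann-category) is a Jibladze–Pirashvili categorical ring: if the distributivity isomorphisms d, e satisfy the associator/commutator compatibility axioms (2R1) (i.e. each (x·−, d_{x,−,−}) and (−·z, e_{−,−,z}) is compatible with a⁺ and c), then they satisfy the associo-commutator compatibility axiom (2R1)′: the two Jibladze–Pirashvili pentagon-type squares involving the canonical associo-commutator b commute. -/

import Mathlib

open CategoryTheory MonoidalCategory

/-- The canonical associo-commutator `b(x,y,z,t) : (x⊕y)⊕(z⊕t) ⟶ (x⊕z)⊕(y⊕t)` of a
symmetric monoidal category, defined as the composite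
`a⁻¹ ; (id ⊕ a) ; (id ⊕ (c ⊕ id)) ; (id ⊕ a⁻¹) ; a` (in the paper's conventions). -/
noncomputable def ac {C : Type*} [Category C] [MonoidalCategory C] [BraidedCategory C]
    (x y z t : C) : (x ⊗ y) ⊗ (z ⊗ t) ⟶ (x ⊗ z) ⊗ (y ⊗ t) :=
  (α_ x y (z ⊗ t)).hom ≫ (x ◁ (α_ y z t).inv) ≫ (x ◁ ((β_ y z).hom ▷ t)) ≫
    (x ◁ (α_ z y t).hom) ≫ (α_ x z (y ⊗ t)).inv

lemma key {R : Type*} [Category R] [MonoidalCategory R] [BraidedCategory R]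
    (F : R → R) (Fm : ∀ {a b : R}, (a ⟶ b) → (F a ⟶ F b))
    (hid : ∀ a : R, Fm (𝟙 a) = 𝟙 (F a))
    (hcomp : ∀ {a b c : R} (f : a ⟶ b) (g : b ⟶ c), Fm (f ≫ g) = Fm f ≫ Fm g)
    (D : ∀ y z : R, F y ⊗ F z ≅ F (y ⊗ z))
    (hnat : ∀ {y y' z z' : R} (g : y ⟶ y') (h : z ⟶ z'),
      (Fm g ⊗ₘ Fm h) ≫ (D y' z').hom = (D y z).hom ≫ Fm (g ⊗ₘ h))
    (ha : ∀ y z t : R,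
      (F y ◁ (D z t).hom) ≫ (D y (z ⊗ t)).hom ≫ Fm (α_ y z t).inv =
        (α_ (F y) (F z) (F t)).inv ≫ ((D y z).hom ▷ F t) ≫ (D (y ⊗ z) t).hom)
    (hc : ∀ y z : R, (D y z).hom ≫ Fm (β_ y z).hom = (β_ (F y) (F z)).hom ≫ (D z y).hom)
    (y z t u : R) :
    ((D y z).hom ⊗ₘ (D t u).hom) ≫ (D (y ⊗ z) (t ⊗ u)).hom ≫ Fm (ac y z t u) =
      ac (F y) (F z) (F t) (F u) ≫ ((D y t).hom ⊗ₘ (D z u).hom) ≫ (D (y ⊗ t) (z ⊗ u)).hom := by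
  -- derived lemmas
  have hL : ∀ (w : R) {a b : R} (h : a ⟶ b),
      (D w a).hom ≫ Fm (w ◁ h) = (F w ◁ Fm h) ≫ (D w b).hom := by
    intro w a b h
    have := hnat (𝟙 w) h
    simpa [hid] using this.symm
  have hR : ∀ (w : R) {a b : R} (h : a ⟶ b),
      (D a w).hom ≫ Fm (h ▷ w) = (Fm h ▷ F w) ≫ (D b w).hom := by
    intro w a b h
    have := hnat h (𝟙 w)
    simpa [hid] using this.symm
  have ha' : ∀ y z t : R,
      ((D y z).hom ▷ F t) ≫ (D (y ⊗ z) t).hom ≫ Fm (α_ y z t).hom =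
        (α_ (F y) (F z) (F t)).hom ≫ (F y ◁ (D z t).hom) ≫ (D y (z ⊗ t)).hom := by
    intro y z t
    have h1 := reassoc_of% (ha y z t)
    rw [← cancel_epi (α_ (F y) (F z) (F t)).inv, Iso.inv_hom_id_assoc, ← h1,
      ← hcomp, Iso.inv_hom_id, hid, Category.comp_id]
  -- the inner computation
  have hinner : (F z ◁ (D t u).hom) ≫ (D z (t ⊗ u)).hom ≫ Fm (α_ z t u).inv ≫
        Fm ((β_ z t).hom ▷ u) ≫ Fm (α_ t z u).hom =
      (α_ (F z) (F t) (F u)).inv ≫ ((β_ (F z) (F t)).hom ▷ F u) ≫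
        (α_ (F t) (F z) (F u)).hom ≫ (F t ◁ (D z u).hom) ≫ (D t (z ⊗ u)).hom := by
    rw [reassoc_of% (ha z t u), reassoc_of% (hR u (β_ z t).hom)]
    rw [← comp_whiskerRight_assoc, hc, comp_whiskerRight_assoc, ha' t z u]
  calc ((D y z).hom ⊗ₘ (D t u).hom) ≫ (D (y ⊗ z) (t ⊗ u)).hom ≫ Fm (ac y z t u)
      = ((F y ⊗ F z) ◁ (D t u).hom) ≫ ((D y z).hom ▷ F (t ⊗ u)) ≫
          (D (y ⊗ z) (t ⊗ u)).hom ≫ Fm (α_ y z (t ⊗ u)).hom ≫ Fm (y ◁ (α_ z t u).inv) ≫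
          Fm (y ◁ ((β_ z t).hom ▷ u)) ≫ Fm (y ◁ (α_ t z u).hom) ≫ Fm (α_ y t (z ⊗ u)).inv := by
        rw [tensorHom_def', ac]
        simp [hcomp]
    _ = ((F y ⊗ F z) ◁ (D t u).hom) ≫ (α_ (F y) (F z) (F (t ⊗ u))).hom ≫
          (F y ◁ (D z (t ⊗ u)).hom) ≫ (D y (z ⊗ (t ⊗ u))).hom ≫ Fm (y ◁ (α_ z t u).inv) ≫
          Fm (y ◁ ((β_ z t).hom ▷ u)) ≫ Fm (y ◁ (α_ t z u).hom) ≫ Fm (α_ y t (z ⊗ u)).inv := by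
        rw [reassoc_of% (ha' y z (t ⊗ u))]
    _ = (α_ (F y) (F z) (F t ⊗ F u)).hom ≫
          (F y ◁ ((F z ◁ (D t u).hom) ≫ (D z (t ⊗ u)).hom ≫ Fm (α_ z t u).inv ≫
            Fm ((β_ z t).hom ▷ u) ≫ Fm (α_ t z u).hom)) ≫
          (D y (t ⊗ (z ⊗ u))).hom ≫ Fm (α_ y t (z ⊗ u)).inv := by
        rw [reassoc_of% (hL y (α_ z t u).inv), reassoc_of% (hL y ((β_ z t).hom ▷ u)),
          reassoc_of% (hL y (α_ t z u).hom)]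
        rw [associator_naturality_right_assoc]
        simp [MonoidalCategory.whiskerLeft_comp]
    _ = ac (F y) (F z) (F t) (F u) ≫ ((D y t).hom ⊗ₘ (D z u).hom) ≫
          (D (y ⊗ t) (z ⊗ u)).hom := by
        rw [hinner]
        simp only [MonoidalCategory.whiskerLeft_comp, Category.assoc]
        rw [ha y t (z ⊗ u), associator_inv_naturality_right_assoc,
          ← tensorHom_def'_assoc, ac]
        simp only [Category.assoc]

/-- Every Quang 2-ring (Ann-category) is a Jibladze–Pirashvili categorical ring: if the
distributors `d, e` satisfy the associator/commutator compatibility axioms (2R1) (i.e.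
each `(x·−, d_{x,−,−})` and `(−·z, e_{−,−,z})` is compatible with `a⁺` and `c`), then
they satisfy the associo-commutator compatibility axiom (2R1)′: the two
Jibladze–Pirashvili squares involving the canonical associo-commutator `b` commute.
Here the additive symmetric 2-group structure is written `⊗` (Mathlib's monoidal
notation), the multiplication is the bifunctor data `(mul, mulMap)`, and `b = ac` is the
canonical associo-commutator built from the associator and the braiding. -/
theorem stmt17 {R : Type*} [Groupoid R] [MonoidalCategory R] [SymmetricCategory R]
    (hinv : ∀ x : R, ∃ y : R, Nonempty (x ⊗ y ≅ 𝟙_ R) ∧ Nonempty (y ⊗ x ≅ 𝟙_ R))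
    -- the multiplicative monoidal structure (as a bifunctor)
    (mul : R → R → R)
    (mulMap : ∀ {x y z w : R}, (x ⟶ y) → (z ⟶ w) → (mul x z ⟶ mul y w))
    (hmulId : ∀ x y : R, mulMap (𝟙 x) (𝟙 y) = 𝟙 (mul x y))
    (hmulComp : ∀ {x y z x' y' z' : R} (f : x ⟶ y) (g : y ⟶ z) (f' : x' ⟶ y') (g' : y' ⟶ z'),
      mulMap (f ≫ g) (f' ≫ g') = mulMap f f' ≫ mulMap g g')
    -- the distributors
    (d : ∀ x y z : R, mul x y ⊗ mul x z ≅ mul x (y ⊗ z))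
    (e : ∀ x y z : R, mul x z ⊗ mul y z ≅ mul (x ⊗ y) z)
    (hdnat : ∀ {x y y' z z' : R} (g : y ⟶ y') (h : z ⟶ z'),
      (mulMap (𝟙 x) g ⊗ₘ mulMap (𝟙 x) h) ≫ (d x y' z').hom =
        (d x y z).hom ≫ mulMap (𝟙 x) (g ⊗ₘ h))
    (henat : ∀ {x x' y y' z : R} (f : x ⟶ x') (g : y ⟶ y'),
      (mulMap f (𝟙 z) ⊗ₘ mulMap g (𝟙 z)) ≫ (e x' y' z).hom =
        (e x y z).hom ≫ mulMap (f ⊗ₘ g) (𝟙 z))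
    -- axiom (2R1): compatibility of `d` and `e` with the associator `a⁺`
    (h2R1da : ∀ x y z t : R,
      (mul x y ◁ (d x z t).hom) ≫ (d x y (z ⊗ t)).hom ≫ mulMap (𝟙 x) (α_ y z t).inv =
        (α_ (mul x y) (mul x z) (mul x t)).inv ≫ ((d x y z).hom ▷ mul x t) ≫
          (d x (y ⊗ z) t).hom)
    (h2R1ea : ∀ x y z t : R,
      (mul x t ◁ (e y z t).hom) ≫ (e x (y ⊗ z) t).hom ≫ mulMap (α_ x y z).inv (𝟙 t) =
        (α_ (mul x t) (mul y t) (mul z t)).inv ≫ ((e x y t).hom ▷ mul z t) ≫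
          (e (x ⊗ y) z t).hom)
    -- axiom (2R1): compatibility of `d` and `e` with the commutator `c`
    (h2R1dc : ∀ x y z : R,
      (d x y z).hom ≫ mulMap (𝟙 x) (β_ y z).hom =
        (β_ (mul x y) (mul x z)).hom ≫ (d x z y).hom)
    (h2R1ec : ∀ x y z : R,
      (e y z x).hom ≫ mulMap (β_ y z).hom (𝟙 x) =
        (β_ (mul y x) (mul z x)).hom ≫ (e z y x).hom) :
    -- conclusion: axiom (2R1)′
    (∀ x y z t u : R,
      ((d x y z).hom ⊗ₘ (d x t u).hom) ≫ (d x (y ⊗ z) (t ⊗ u)).hom ≫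
          mulMap (𝟙 x) (ac y z t u) =
        ac (mul x y) (mul x z) (mul x t) (mul x u) ≫
          ((d x y t).hom ⊗ₘ (d x z u).hom) ≫ (d x (y ⊗ t) (z ⊗ u)).hom) ∧
    (∀ x y z t u : R,
      ((e x y u).hom ⊗ₘ (e z t u).hom) ≫ (e (x ⊗ y) (z ⊗ t) u).hom ≫
          mulMap (ac x y z t) (𝟙 u) =
        ac (mul x u) (mul y u) (mul z u) (mul t u) ≫
          ((e x z u).hom ⊗ₘ (e y t u).hom) ≫ (e (x ⊗ z) (y ⊗ t) u).hom) := by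
  constructor
  · intro x y z t u
    exact key (mul x) (fun {a b} f => mulMap (𝟙 x) f) (fun a => hmulId x a)
      (fun f g => by simpa using hmulComp (𝟙 x) (𝟙 x) f g)
      (d x) (fun g h => hdnat g h) (h2R1da x) (h2R1dc x) y z t u
  · intro x y z t u
    exact key (fun a => mul a u) (fun {a b} f => mulMap f (𝟙 u)) (fun a => hmulId a u)
      (fun f g => by simpa using hmulComp f g (𝟙 u) (𝟙 u))
      (fun a b => e a b u) (fun g h => henat g h) (fun a b c => h2R1ea a b c u)
      (fun a b => h2R1ec u a b) x y z t
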